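/- arXiv:2410.05148 — 4 statements merged into one kernel-verified Lean document; each statement's English description precedes it below -/
import Mathlib

section
/- For every real number u and all real a < b, the limit as ε → 0⁺ of (1/(2πi)) ∫_a^b ( 1/(u − (z + iε)) − 1/(u − (z − iε)) ) dz exists and equals ½(𝟙_{[a,b]}(u) + 𝟙_{(a,b)}(u)); that is, it equals 1 if u ∈ (a,b), equals ½ if u = a or u = b, and equals 0 if u ∉ [a,b]. -/
open MeasureTheory Filter Real

lemma real_int (u a b ε : ℝ) (hε : 0 < ε) :
    (∫ z in a..b, ε / ((u - z)^2 + ε^2))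
      = arctan ((u - a)/ε) - arctan ((u - b)/ε) := by
  have h1 : ∀ z : ℝ, ε / ((u - z)^2 + ε^2)
      = ε⁻¹ * (1 + ((z - u)/ε)^2)⁻¹ := by
    intro z
    rw [div_pow]
    field_simp
    ring
  simp_rw [h1]
  rw [intervalIntegral.integral_const_mul]
  have h2 : (∫ z in a..b, (1 + ((z - u)/ε)^2)⁻¹)
      = ∫ x in (a-u)..(b-u), (1 + (x/ε)^2)⁻¹ := by
    exact intervalIntegral.integral_comp_sub_right (fun x => (1 + (x/ε)^2)⁻¹) u
  rw [h2, intervalIntegral.integral_comp_div (fun x => (1 + x^2)⁻¹) hε.ne',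
    integral_inv_one_add_sq]
  rw [smul_eq_mul]
  have : (u - a)/ε = -((a-u)/ε) := by ring
  rw [this, arctan_neg]
  have : (u - b)/ε = -((b-u)/ε) := by ring
  rw [this, arctan_neg]
  field_simp
  ring

lemma complex_eq (u a b ε : ℝ) (hε : 0 < ε) :
    (1 / (2 * Real.pi * Complex.I)) *
        ∫ z in a..b,
          (1 / ((u : ℂ) - ((z : ℂ) + Complex.I * (ε : ℂ)))
            - 1 / ((u : ℂ) - ((z : ℂ) - Complex.I * (ε : ℂ))))
      = (((arctan ((u - a)/ε) - arctan ((u - b)/ε))/Real.pi : ℝ) : ℂ) := by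
  have key : ∀ z : ℝ,
      (1 / ((u : ℂ) - ((z : ℂ) + Complex.I * (ε : ℂ)))
        - 1 / ((u : ℂ) - ((z : ℂ) - Complex.I * (ε : ℂ))))
      = ((2 * ε / ((u - z)^2 + ε^2) : ℝ) : ℂ) * Complex.I := by
    intro z
    have h1 : ((u : ℂ) - ((z : ℂ) + Complex.I * (ε : ℂ))) ≠ 0 := by
      intro h
      have := congrArg Complex.im h
      simp [Complex.sub_im, Complex.add_im, Complex.mul_im] at this
      exact hε.ne' this
    have h2 : ((u : ℂ) - ((z : ℂ) - Complex.I * (ε : ℂ))) ≠ 0 := by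
      intro h
      have := congrArg Complex.im h
      simp [Complex.sub_im, Complex.mul_im] at this
      exact hε.ne' this
    rw [div_sub_div _ _ h1 h2]
    rw [show ((u:ℂ) - ((z:ℂ)+Complex.I*ε)) * ((u:ℂ) - ((z:ℂ)-Complex.I*ε))
        = (((u-z)^2+ε^2 : ℝ):ℂ) from by
      push_cast; linear_combination (-(ε:ℂ)^2) * Complex.I_sq]
    rw [Complex.ofReal_div, div_mul_eq_mul_div]
    congr 1
    push_cast
    ring
  simp_rw [key]
  rw [intervalIntegral.integral_mul_const, intervalIntegral.integral_ofReal]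
  have := real_int u a b ε hε
  have h2 : (∫ z in a..b, 2 * ε / ((u - z)^2 + ε^2))
      = 2 * (arctan ((u - a)/ε) - arctan ((u - b)/ε)) := by
    simp_rw [mul_div_assoc]
    rw [intervalIntegral.integral_const_mul, this]
  rw [h2]
  have hπ : (Real.pi : ℂ) ≠ 0 := by exact_mod_cast Real.pi_ne_zero
  have hI := Complex.I_ne_zero
  push_cast
  field_simp

lemma arctan_lim (c : ℝ) :
    Tendsto (fun ε : ℝ => arctan (c/ε)) (nhdsWithin 0 (Set.Ioi 0))
      (nhds (if 0 < c then π/2 else if c < 0 then -(π/2) else 0)) := by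
  rcases lt_trichotomy c 0 with hc|hc|hc
  · rw [if_neg (by linarith), if_pos hc]
    have h1 : Tendsto (fun ε : ℝ => c/ε) (nhdsWithin 0 (Set.Ioi 0)) atBot := by
      have h2 : Tendsto (fun ε : ℝ => (-c) * ε⁻¹) (nhdsWithin 0 (Set.Ioi 0)) atTop :=
        tendsto_inv_nhdsGT_zero.const_mul_atTop (by linarith)
      have := tendsto_neg_atTop_atBot.comp h2
      refine this.congr fun ε => ?_
      simp [div_eq_mul_inv]
    exact tendsto_nhds_of_tendsto_nhdsWithin (tendsto_arctan_atBot.comp h1)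
  · subst hc; simp
  · rw [if_pos hc]
    have h1 : Tendsto (fun ε : ℝ => c/ε) (nhdsWithin 0 (Set.Ioi 0)) atTop := by
      simpa [div_eq_mul_inv] using tendsto_inv_nhdsGT_zero.const_mul_atTop hc
    exact tendsto_nhds_of_tendsto_nhdsWithin (tendsto_arctan_atTop.comp h1)

/-- Stone's formula scalar computation: for `u ∈ ℝ` and `a < b`, the limit as `ε → 0⁺` of
`(1/(2πi)) ∫_a^b (1/(u - (z + iε)) - 1/(u - (z - iε))) dz` equals
`(𝟙_{[a,b]}(u) + 𝟙_{(a,b)}(u)) / 2`. -/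
theorem stone_formula_scalar (u a b : ℝ) (hab : a < b) :
    Tendsto
      (fun ε : ℝ => (1 / (2 * Real.pi * Complex.I)) *
        ∫ z in a..b,
          (1 / ((u : ℂ) - ((z : ℂ) + Complex.I * (ε : ℂ)))
            - 1 / ((u : ℂ) - ((z : ℂ) - Complex.I * (ε : ℂ)))))
      (nhdsWithin 0 (Set.Ioi 0))
      (nhds ((((Set.Icc a b).indicator (fun _ => (1 : ℝ)) u
          + (Set.Ioo a b).indicator (fun _ => (1 : ℝ)) u) / 2 : ℝ) : ℂ)) := by
  have hπ : Real.pi ≠ 0 := Real.pi_ne_zero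
  have hreal : Tendsto (fun ε : ℝ => (arctan ((u-a)/ε) - arctan ((u-b)/ε))/Real.pi)
      (nhdsWithin 0 (Set.Ioi 0))
      (nhds (((Set.Icc a b).indicator (fun _ => (1 : ℝ)) u
          + (Set.Ioo a b).indicator (fun _ => (1 : ℝ)) u) / 2)) := by
    have h := ((arctan_lim (u-a)).sub (arctan_lim (u-b))).div_const Real.pi
    have hval : ((if 0 < u - a then π/2 else if u - a < 0 then -(π/2) else 0)
        - (if 0 < u - b then π/2 else if u - b < 0 then -(π/2) else 0))/Real.pi
        = ((Set.Icc a b).indicator (fun _ => (1 : ℝ)) u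
          + (Set.Ioo a b).indicator (fun _ => (1 : ℝ)) u) / 2 := by
      rcases lt_trichotomy u a with h1|h1|h1
      · rw [if_neg (by linarith), if_pos (by linarith), if_neg (by linarith),
          if_pos (by linarith),
          Set.indicator_of_notMem (by simp [Set.mem_Icc]; intro; linarith),
          Set.indicator_of_notMem (by simp [Set.mem_Ioo]; intro; linarith)]
        simp
      · subst h1
        rw [if_neg (by linarith), if_neg (by linarith), if_neg (by linarith),
          if_pos (by linarith),
          Set.indicator_of_mem (by simp [Set.mem_Icc]; linarith),
          Set.indicator_of_notMem (by simp [Set.mem_Ioo])]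
        field_simp
        ring
      · rcases lt_trichotomy u b with h2|h2|h2
        · rw [if_pos (by linarith), if_neg (by linarith), if_pos (by linarith),
            Set.indicator_of_mem (by simp [Set.mem_Icc]; constructor <;> linarith),
            Set.indicator_of_mem (by simp [Set.mem_Ioo]; constructor <;> linarith)]
          field_simp
          ring
        · subst h2
          rw [if_pos (by linarith), if_neg (by linarith), if_neg (by linarith),
            Set.indicator_of_mem (by simp [Set.mem_Icc]; linarith),
            Set.indicator_of_notMem (by simp [Set.mem_Ioo])]
          field_simp
          ring
        · rw [if_pos (by linarith), if_pos (by linarith),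
            Set.indicator_of_notMem (by simp [Set.mem_Icc]; intro _; linarith),
            Set.indicator_of_notMem (by simp [Set.mem_Ioo]; intro _; linarith)]
          simp
    rwa [hval] at h
  have hc := (Complex.continuous_ofReal.tendsto _).comp hreal
  refine hc.congr' ?_
  filter_upwards [self_mem_nhdsWithin] with ε hε
  exact (complex_eq u a b ε hε).symm
end

section
/- Let ψ : ℝ → ℂ be integrable with integrable Fourier transform 𝓕ψ. Then for every real t ≠ 0 and every a ∈ ℝ, |∫_ℝ e^{−i(tλ² + aλ)} ψ(λ) dλ| ≤ √(π/|t|) · ∫_ℝ |𝓕ψ(ξ)| dξ. In particular, sup_{a ∈ ℝ} |∫_ℝ e^{−i(tλ² + aλ)} ψ(λ) dλ| ≲ |t|^{−1/2} ‖𝓕ψ‖_{L¹}. -/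
open MeasureTheory FourierTransform Complex Filter
open scoped Real Topology
set_option maxHeartbeats 1000000

lemma mult_formula (ψ : ℝ → ℂ) (hψ : Integrable ψ) (H : ℝ → ℂ) (hH : Integrable H) :
    ∫ ξ : ℝ, (𝓕 H ξ) * ψ ξ = ∫ x : ℝ, H x * (𝓕 ψ x) := by
  have hflip : (innerₗ ℝ).flip = innerₗ ℝ := by
    apply LinearMap.ext; intro x; apply LinearMap.ext; intro y
    exact real_inner_comm x y
  have := VectorFourier.integral_fourierIntegral_smul_eq_flip (L := innerₗ ℝ)
    Real.continuous_fourierChar continuous_inner hH hψ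
  rw [hflip] at this
  simp only [smul_eq_mul] at this
  exact this

lemma aux_bound (ψ : ℝ → ℂ) (hψ : Integrable ψ) (hFψ : Integrable (𝓕 ψ))
    (t : ℝ) (ht : t ≠ 0) (a : ℝ) {ε : ℝ} (hε : 0 < ε) :
    ‖∫ l : ℝ, cexp (-((ε : ℂ) + I * t) * l ^ 2 - I * a * l) * ψ l‖
      ≤ Real.sqrt (π / |t|) * ∫ ξ : ℝ, ‖𝓕 ψ ξ‖ := by
  set b : ℂ := (ε : ℂ) + I * t with hb
  have hbre : b.re = ε := by simp [hb]
  have hbim : b.im = t := by simp [hb]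
  have hb0 : b ≠ 0 := by
    intro h; rw [h] at hbre; exact hε.ne (by simpa using hbre)
  have hnsq : 0 < Complex.normSq b := Complex.normSq_pos.mpr hb0
  clear_value b
  have hπb : 0 < ((π : ℂ) / b).re := by
    rw [Complex.div_re]
    simp only [Complex.ofReal_re, Complex.ofReal_im, hbre, hbim, zero_mul, zero_div, add_zero]
    positivity
  set H : ℝ → ℂ := fun x : ℝ => cexp (-π * ((π : ℂ) / b) * x ^ 2 + 2 * π * ((a : ℂ) / (2 * b)) * x) with hH
  have hHint : Integrable H := by
    have h1 : (0 : ℝ) < ((π : ℂ) * ((π : ℂ) / b)).re := by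
      rw [Complex.re_ofReal_mul]; positivity
    have := integrable_cexp_quadratic h1 (2 * π * ((a : ℂ) / (2 * b))) 0
    refine this.congr ?_
    filter_upwards with x
    rw [hH]; ring_nf
  have hFH : 𝓕 H = fun lam : ℝ =>
      1 / ((π : ℂ) / b) ^ (1 / 2 : ℂ) * cexp (-π / ((π : ℂ) / b) * (lam + I * ((a : ℂ) / (2 * b))) ^ 2) :=
    fourier_gaussian_pi' hπb _
  have hcpow0 : ((π : ℂ) / b) ^ (1 / 2 : ℂ) ≠ 0 := by
    rw [Ne, Complex.cpow_eq_zero_iff]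
    push_neg
    intro h
    exact absurd h (div_ne_zero (Complex.ofReal_ne_zero.mpr Real.pi_ne_zero) hb0)
  have hb4 : (4 : ℂ) * b ≠ 0 := mul_ne_zero (by norm_num) hb0
  have exp_eq : ∀ lam : ℝ, (-(a : ℂ) ^ 2 / (4 * b)) + (-b * ((lam : ℂ) + I * ((a : ℂ) / (2 * b))) ^ 2)
      = -b * lam ^ 2 - I * a * lam := by
    intro lam
    field_simp
    ring_nf
    simp only [Complex.I_sq]
    try ring
  -- pointwise identity
  have key : ∀ lam : ℝ, cexp (-b * lam ^ 2 - I * a * lam)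
      = ((π : ℂ) / b) ^ (1 / 2 : ℂ) * (cexp (-(a : ℂ) ^ 2 / (4 * b)) * 𝓕 H lam) := by
    intro lam
    rw [hFH]
    simp only
    rw [show -↑π / ((π : ℂ) / b) = -b by
      rw [div_div_eq_mul_div, neg_mul, neg_div,
        mul_div_cancel_left₀ _ (Complex.ofReal_ne_zero.mpr Real.pi_ne_zero)]]
    rw [show ((π : ℂ) / b) ^ (1 / 2 : ℂ) * (cexp (-(a : ℂ) ^ 2 / (4 * b)) *
        (1 / ((π : ℂ) / b) ^ (1 / 2 : ℂ) * cexp (-b * ((lam : ℂ) + I * ((a : ℂ) / (2 * b))) ^ 2)))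
        = cexp (-(a : ℂ) ^ 2 / (4 * b)) * cexp (-b * ((lam : ℂ) + I * ((a : ℂ) / (2 * b))) ^ 2) by
      field_simp
      try ring]
    rw [← Complex.exp_add, exp_eq]
  have hmul := mult_formula ψ hψ H hHint
  have exp_eq2 : ∀ x : ℝ, cexp (-(a : ℂ) ^ 2 / (4 * b)) * H x
      = cexp ((((π * x - a / 2) ^ 2 : ℝ) : ℂ) * (-(1 / b))) := by
    intro x
    rw [hH]
    simp only
    rw [← Complex.exp_add]
    congr 1
    push_cast
    field_simp
    ring_nf
    try ring
  have step1 : (∫ l : ℝ, cexp (-b * l ^ 2 - I * a * l) * ψ l)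
      = ((π : ℂ) / b) ^ (1 / 2 : ℂ)
        * ∫ x : ℝ, (cexp (-(a : ℂ) ^ 2 / (4 * b)) * H x) * 𝓕 ψ x := by
    simp_rw [key, mul_assoc]
    rw [integral_const_mul, integral_const_mul, hmul, ← integral_const_mul]
    try simp_rw [← mul_assoc]
  rw [step1, norm_mul]
  have habs : |t| ≤ ‖b‖ := hbim ▸ Complex.abs_im_le_norm b
  have htpos : 0 < |t| := abs_pos.mpr ht
  have h1 : ‖((π : ℂ) / b) ^ (1 / 2 : ℂ)‖ ≤ Real.sqrt (π / |t|) := by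
    rw [show (1 / 2 : ℂ) = ((1 / 2 : ℝ) : ℂ) by norm_num,
      Complex.norm_cpow_real, norm_div, Complex.norm_real, Real.norm_eq_abs, abs_of_pos Real.pi_pos]
    calc (π / ‖b‖) ^ (1 / 2 : ℝ) ≤ (π / |t|) ^ (1 / 2 : ℝ) := by gcongr
      _ = Real.sqrt (π / |t|) := (Real.sqrt_eq_rpow _).symm
  have h2 : ‖∫ x : ℝ, (cexp (-(a : ℂ) ^ 2 / (4 * b)) * H x) * 𝓕 ψ x‖ ≤ ∫ ξ : ℝ, ‖𝓕 ψ ξ‖ := by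
    refine (norm_integral_le_integral_norm _).trans ?_
    refine integral_mono_of_nonneg (Filter.Eventually.of_forall fun x => norm_nonneg _)
      hFψ.norm (Filter.Eventually.of_forall fun x => ?_)
    show ‖cexp (-(a : ℂ) ^ 2 / (4 * b)) * H x * 𝓕 ψ x‖ ≤ ‖𝓕 ψ x‖
    rw [norm_mul]
    have hle1 : ‖cexp (-(a : ℂ) ^ 2 / (4 * b)) * H x‖ ≤ 1 := by
      rw [exp_eq2 x, Complex.norm_exp, Real.exp_le_one_iff,
        Complex.re_ofReal_mul]
      have : (-(1 / b)).re ≤ 0 := by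
        rw [neg_re, one_div, Complex.inv_re, hbre]
        exact neg_nonpos.mpr (div_nonneg hε.le hnsq.le)
      nlinarith [sq_nonneg (π * x - a / 2)]
    calc ‖cexp (-(a : ℂ) ^ 2 / (4 * b)) * H x‖ * ‖𝓕 ψ x‖ ≤ 1 * ‖𝓕 ψ x‖ := by
          gcongr
      _ = ‖𝓕 ψ x‖ := one_mul _
  calc ‖((π : ℂ) / b) ^ (1 / 2 : ℂ)‖ * ‖∫ x : ℝ, (cexp (-(a : ℂ) ^ 2 / (4 * b)) * H x) * 𝓕 ψ x‖
      ≤ Real.sqrt (π / |t|) * ∫ ξ : ℝ, ‖𝓕 ψ ξ‖ :=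
        mul_le_mul h1 h2 (norm_nonneg _) (Real.sqrt_nonneg _)

/-- Dispersive oscillatory-integral bound: if `ψ` is integrable with integrable Fourier
transform, then for `t ≠ 0` and any `a ∈ ℝ`,
`|∫ e^{-i(tλ² + aλ)} ψ(λ) dλ| ≤ √(π/|t|) ∫ |𝓕ψ(ξ)| dξ`. -/
theorem oscillatory_integral_dispersive_bound (ψ : ℝ → ℂ) (hψ : Integrable ψ)
    (hFψ : Integrable (𝓕 ψ)) (t : ℝ) (ht : t ≠ 0) (a : ℝ) :
    ‖∫ l : ℝ, Complex.exp (-Complex.I * ((t : ℂ) * (l : ℂ) ^ 2 + (a : ℂ) * (l : ℂ))) * ψ l‖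
      ≤ Real.sqrt (Real.pi / |t|) * ∫ ξ : ℝ, ‖𝓕 ψ ξ‖ := by
  set F : ℝ → ℂ :=
    fun ε => ∫ l : ℝ, cexp (-((ε : ℂ) + I * t) * l ^ 2 - I * a * l) * ψ l with hF
  have hgoal : (∫ l : ℝ, cexp (-I * ((t : ℂ) * l ^ 2 + (a : ℂ) * l)) * ψ l) = F 0 := by
    rw [hF]
    refine integral_congr_ae (Filter.Eventually.of_forall fun l => ?_)
    simp only
    congr 1
    push_cast
    ring
  rw [hgoal]
  have htend : Tendsto F (𝓝[>] (0 : ℝ)) (𝓝 (F 0)) := by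
    rw [hF]
    simp only
    refine tendsto_integral_filter_of_dominated_convergence (fun l => ‖ψ l‖) ?_ ?_ hψ.norm ?_
    · filter_upwards with ε
      exact (Continuous.aestronglyMeasurable (by continuity)).mul hψ.1
    · filter_upwards [self_mem_nhdsWithin] with ε (hε : ε ∈ Set.Ioi (0 : ℝ))
      refine Filter.Eventually.of_forall fun l => ?_
      rw [norm_mul]
      have h1 : ‖cexp (-((ε : ℂ) + I * t) * l ^ 2 - I * a * l)‖ ≤ 1 := by
        rw [Complex.norm_exp, Real.exp_le_one_iff]
        have : (-((ε : ℂ) + I * t) * (l : ℂ) ^ 2 - I * a * l).re = -(ε * l ^ 2) := by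
          simp [Complex.ext_iff, pow_two]
          try ring
        rw [this]
        have := hε.out
        nlinarith [sq_nonneg l]
      calc ‖cexp (-((ε : ℂ) + I * t) * l ^ 2 - I * a * l)‖ * ‖ψ l‖ ≤ 1 * ‖ψ l‖ := by gcongr
        _ = ‖ψ l‖ := one_mul _
    · refine Filter.Eventually.of_forall fun l => ?_
      apply Tendsto.mul_const
      refine (Continuous.tendsto ?_ 0).mono_left nhdsWithin_le_nhds
      continuity
  have hbound : ∀ᶠ ε in 𝓝[>] (0 : ℝ), ‖F ε‖ ≤ Real.sqrt (π / |t|) * ∫ ξ : ℝ, ‖𝓕 ψ ξ‖ := by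
    filter_upwards [self_mem_nhdsWithin] with ε hε
    exact aux_bound ψ hψ hFψ t ht a hε
  exact le_of_tendsto htend.norm hbound
end

section
/- Let f₀ : ℝ → ℂ be continuous with compact support. For t ≠ 0 define u(t,x) = (4πit)^{−1/2} ∫_ℝ e^{i(x−y)²/(4t)} f₀(y) dy, where (4πit)^{−1/2} is taken with the principal branch of the square root. Then: (1) for every t ≠ 0 and x ∈ ℝ, u is differentiable in t and twice differentiable in x at (t,x) and satisfies i ∂_t u(t,x) + ∂²_x u(t,x) = 0; and (2) for every t ≠ 0, sup_{x ∈ ℝ} |u(t,x)| ≤ (4π|t|)^{−1/2} ∫_ℝ |f₀(y)| dy. -/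
open MeasureTheory

section FSaux
open Complex

lemma FS.norm_exp (t a b : ℝ) :
    ‖Complex.exp (Complex.I * ((a:ℂ) - b)^2 / (4*(t:ℂ)))‖ = 1 := by
  have h : Complex.I * ((a:ℂ) - b)^2 / (4*(t:ℂ)) = (((a-b)^2/(4*t) : ℝ) : ℂ) * Complex.I := by
    push_cast; ring
  rw [h, Complex.norm_exp_ofReal_mul_I]

lemma FS.norm_lin (t ξ y : ℝ) :
    ‖Complex.I * ((ξ:ℂ) - y)/(2*(t:ℂ))‖ = |ξ - y|/(2*|t|) := by
  have h : Complex.I * ((ξ:ℂ) - y)/(2*(t:ℂ)) = (((ξ - y)/(2*t) : ℝ) : ℂ) * Complex.I := by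
    push_cast; ring
  rw [h, norm_mul, Complex.norm_I, mul_one, Complex.norm_real, Real.norm_eq_abs, abs_div,
    abs_mul]
  norm_num

lemma FS.norm_I_div (t : ℝ) : ‖Complex.I/(2*(t:ℂ))‖ = 1/(2*|t|) := by
  have h : Complex.I/(2*(t:ℂ)) = (((1:ℝ)/(2*t) : ℝ) : ℂ) * Complex.I := by push_cast; ring
  rw [h, norm_mul, Complex.norm_I, mul_one, Complex.norm_real, Real.norm_eq_abs, abs_div,
    abs_mul]
  norm_num

lemma FS.integrable_mul (f₀ : ℝ → ℂ) (hf₀ : Continuous f₀) (hsupp : HasCompactSupport f₀)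
    (g : ℝ → ℂ) (hg : Continuous g) : Integrable (fun y => g y * f₀ y) :=
  (hg.mul hf₀).integrable_of_hasCompactSupport (hsupp.mul_left)

lemma FS.integrable_mul_norm (f₀ : ℝ → ℂ) (hf₀ : Continuous f₀) (hsupp : HasCompactSupport f₀)
    (g : ℝ → ℝ) (hg : Continuous g) : Integrable (fun y => g y * ‖f₀ y‖) :=
  (hg.mul hf₀.norm).integrable_of_hasCompactSupport (hsupp.norm.mul_left)

lemma FS.hasDerivAt_exp_x (t : ℝ) (ξ y : ℝ) :
    HasDerivAt (fun ξ' : ℝ => Complex.exp (Complex.I * ((ξ':ℂ) - y)^2 / (4*(t:ℂ))))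
      (Complex.I * ((ξ:ℂ) - y)/(2*(t:ℂ)) * Complex.exp (Complex.I * ((ξ:ℂ) - y)^2 / (4*(t:ℂ)))) ξ := by
  have h1 : HasDerivAt (fun z : ℂ => Complex.I * (z - y)^2 / (4*(t:ℂ)))
      (Complex.I * (2 * ((ξ:ℂ) - y)) / (4*(t:ℂ))) (ξ:ℂ) := by
    have := (((hasDerivAt_id ((ξ:ℂ))).sub_const (y:ℂ)).pow 2).const_mul Complex.I |>.div_const (4*(t:ℂ))
    refine this.congr_deriv ?_
    simp only [id_eq]
    push_cast
    ring
  have h2 := (h1.cexp).comp_ofReal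
  convert h2 using 1
  ring

lemma FS.hasDerivAt_lin (t : ℝ) (ξ y : ℝ) :
    HasDerivAt (fun ξ' : ℝ => Complex.I * ((ξ':ℂ) - y)/(2*(t:ℂ))) (Complex.I/(2*(t:ℂ))) ξ := by
  have h1 : HasDerivAt (fun z : ℂ => Complex.I * (z - y)/(2*(t:ℂ))) (Complex.I/(2*(t:ℂ))) (ξ:ℂ) := by
    have := ((hasDerivAt_id ((ξ:ℂ))).sub_const (y:ℂ)).const_mul Complex.I |>.div_const (2*(t:ℂ))
    refine this.congr_deriv ?_
    ring
  exact h1.comp_ofReal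

lemma FS.hasDerivAt_exp_t (τ : ℝ) (hτ : τ ≠ 0) (x y : ℝ) :
    HasDerivAt (fun τ' : ℝ => Complex.exp (Complex.I * ((x:ℂ) - y)^2 / (4*(τ':ℂ))))
      (Complex.exp (Complex.I * ((x:ℂ) - y)^2 / (4*(τ:ℂ))) *
        (-(Complex.I * ((x:ℂ) - y)^2) / (4*(τ:ℂ)^2))) τ := by
  have hτ' : (4:ℂ)*(τ:ℂ) ≠ 0 := by
    simp [Complex.ofReal_ne_zero, hτ]
  have h1 : HasDerivAt (fun z : ℂ => Complex.I * ((x:ℂ) - y)^2 / (4*z))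
      ((0 * (4*(τ:ℂ)) - Complex.I * ((x:ℂ) - y)^2 * 4) / (4*(τ:ℂ))^2) (τ:ℂ) := by
    have hd : HasDerivAt (fun z : ℂ => 4*z) (4:ℂ) (τ:ℂ) := by
      simpa using (hasDerivAt_id ((τ:ℂ))).const_mul (4:ℂ)
    exact (hasDerivAt_const ((τ:ℂ)) (Complex.I * ((x:ℂ) - y)^2)).div hd hτ'
  have h2 := (h1.cexp).comp_ofReal
  convert h2 using 1
  have ht2 : ((τ:ℂ))^2 ≠ 0 := pow_ne_zero _ (by simpa using hτ)
  field_simp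
  ring

lemma FS.key_x (f₀ : ℝ → ℂ) (hf₀ : Continuous f₀) (hsupp : HasCompactSupport f₀)
    (t : ℝ) (ht : t ≠ 0) (x : ℝ)
    (hptw : ∀ ξ y : ℝ,
      HasDerivAt (fun ξ' : ℝ => Complex.exp (Complex.I * ((ξ':ℂ) - y)^2 / (4*(t:ℂ))))
        (Complex.I * ((ξ:ℂ) - y)/(2*(t:ℂ)) * Complex.exp (Complex.I * ((ξ:ℂ) - y)^2 / (4*(t:ℂ)))) ξ)
    (hint : ∀ g : ℝ → ℂ, Continuous g → Integrable (fun y => g y * f₀ y))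
    (hintn : ∀ g : ℝ → ℝ, Continuous g → Integrable (fun y => g y * ‖f₀ y‖)) :
    Integrable (fun y : ℝ => Complex.I * ((x:ℂ) - y)/(2*(t:ℂ)) *
        Complex.exp (Complex.I * ((x:ℂ) - y)^2 / (4*(t:ℂ))) * f₀ y) ∧
    HasDerivAt (fun ξ : ℝ => ∫ y : ℝ, Complex.exp (Complex.I * ((ξ:ℂ) - y)^2 / (4*(t:ℂ))) * f₀ y)
      (∫ y : ℝ, Complex.I * ((x:ℂ) - y)/(2*(t:ℂ)) *
        Complex.exp (Complex.I * ((x:ℂ) - y)^2 / (4*(t:ℂ))) * f₀ y) x := by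
  have hcont : ∀ ξ : ℝ, Continuous fun y : ℝ =>
      Complex.exp (Complex.I * ((ξ:ℂ) - y)^2 / (4*(t:ℂ))) := by
    intro ξ; fun_prop
  have hcont' : ∀ ξ : ℝ, Continuous fun y : ℝ =>
      Complex.I * ((ξ:ℂ) - y)/(2*(t:ℂ)) * Complex.exp (Complex.I * ((ξ:ℂ) - y)^2 / (4*(t:ℂ))) := by
    intro ξ; fun_prop
  have h1 : ∀ᶠ ξ : ℝ in nhds x, AEStronglyMeasurable
      (fun y : ℝ => Complex.exp (Complex.I * ((ξ:ℂ) - y)^2 / (4*(t:ℂ))) * f₀ y) volume :=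
    Filter.Eventually.of_forall fun ξ => (hint _ (hcont ξ)).aestronglyMeasurable
  have h2 : Integrable (fun y : ℝ => Complex.exp (Complex.I * ((x:ℂ) - y)^2 / (4*(t:ℂ))) * f₀ y) :=
    hint _ (hcont x)
  have h3 : AEStronglyMeasurable (fun y : ℝ => Complex.I * ((x:ℂ) - y)/(2*(t:ℂ)) *
      Complex.exp (Complex.I * ((x:ℂ) - y)^2 / (4*(t:ℂ))) * f₀ y) volume :=
    (hint _ (hcont' x)).aestronglyMeasurable
  have h4 : ∀ᵐ y : ℝ, ∀ ξ ∈ Metric.ball x 1,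
      ‖Complex.I * ((ξ:ℂ) - y)/(2*(t:ℂ)) *
        Complex.exp (Complex.I * ((ξ:ℂ) - y)^2 / (4*(t:ℂ))) * f₀ y‖
      ≤ (|x| + 1 + |y|)/(2*|t|) * ‖f₀ y‖ := by
    refine Filter.Eventually.of_forall fun y ξ hξ => ?_
    rw [norm_mul, norm_mul, FS.norm_exp, mul_one, FS.norm_lin]
    have hξx : |ξ - x| < 1 := by simpa [Real.dist_eq] using Metric.mem_ball.1 hξ
    have hb : |ξ - y| ≤ |x| + 1 + |y| := by
      calc |ξ - y| ≤ |ξ| + |y| := abs_sub _ _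
        _ ≤ |x| + 1 + |y| := by
            have := abs_sub_abs_le_abs_sub ξ x
            linarith
    gcongr
  have h5 : Integrable (fun y : ℝ => (|x| + 1 + |y|)/(2*|t|) * ‖f₀ y‖) :=
    hintn _ (by fun_prop)
  have h6 : ∀ᵐ y : ℝ, ∀ ξ ∈ Metric.ball x 1,
      HasDerivAt (fun ξ' : ℝ => Complex.exp (Complex.I * ((ξ':ℂ) - y)^2 / (4*(t:ℂ))) * f₀ y)
        (Complex.I * ((ξ:ℂ) - y)/(2*(t:ℂ)) *
          Complex.exp (Complex.I * ((ξ:ℂ) - y)^2 / (4*(t:ℂ))) * f₀ y) ξ :=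
    Filter.Eventually.of_forall fun y ξ _ => (hptw ξ y).mul_const (f₀ y)
  exact hasDerivAt_integral_of_dominated_loc_of_deriv_le (Metric.ball_mem_nhds x one_pos) h1 h2 h3 h4 h5 h6

lemma FS.key_xx (f₀ : ℝ → ℂ) (hf₀ : Continuous f₀)
    (t : ℝ) (ht : t ≠ 0) (x : ℝ)
    (hptw : ∀ ξ y : ℝ,
      HasDerivAt (fun ξ' : ℝ => Complex.exp (Complex.I * ((ξ':ℂ) - y)^2 / (4*(t:ℂ))))
        (Complex.I * ((ξ:ℂ) - y)/(2*(t:ℂ)) * Complex.exp (Complex.I * ((ξ:ℂ) - y)^2 / (4*(t:ℂ)))) ξ)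
    (hlin : ∀ ξ y : ℝ,
      HasDerivAt (fun ξ' : ℝ => Complex.I * ((ξ':ℂ) - y)/(2*(t:ℂ))) (Complex.I/(2*(t:ℂ))) ξ)
    (hint : ∀ g : ℝ → ℂ, Continuous g → Integrable (fun y => g y * f₀ y))
    (hintn : ∀ g : ℝ → ℝ, Continuous g → Integrable (fun y => g y * ‖f₀ y‖)) :
    Integrable (fun y : ℝ => (Complex.I/(2*(t:ℂ)) * Complex.exp (Complex.I * ((x:ℂ) - y)^2 / (4*(t:ℂ)))
        + Complex.I * ((x:ℂ) - y)/(2*(t:ℂ)) * (Complex.I * ((x:ℂ) - y)/(2*(t:ℂ)) *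
          Complex.exp (Complex.I * ((x:ℂ) - y)^2 / (4*(t:ℂ))))) * f₀ y) ∧
    HasDerivAt (fun ξ : ℝ => ∫ y : ℝ, Complex.I * ((ξ:ℂ) - y)/(2*(t:ℂ)) *
        Complex.exp (Complex.I * ((ξ:ℂ) - y)^2 / (4*(t:ℂ))) * f₀ y)
      (∫ y : ℝ, (Complex.I/(2*(t:ℂ)) * Complex.exp (Complex.I * ((x:ℂ) - y)^2 / (4*(t:ℂ)))
        + Complex.I * ((x:ℂ) - y)/(2*(t:ℂ)) * (Complex.I * ((x:ℂ) - y)/(2*(t:ℂ)) *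
          Complex.exp (Complex.I * ((x:ℂ) - y)^2 / (4*(t:ℂ))))) * f₀ y) x := by
  have hcont' : ∀ ξ : ℝ, Continuous fun y : ℝ =>
      Complex.I * ((ξ:ℂ) - y)/(2*(t:ℂ)) * Complex.exp (Complex.I * ((ξ:ℂ) - y)^2 / (4*(t:ℂ))) := by
    intro ξ; fun_prop
  have hcont'' : ∀ ξ : ℝ, Continuous fun y : ℝ =>
      Complex.I/(2*(t:ℂ)) * Complex.exp (Complex.I * ((ξ:ℂ) - y)^2 / (4*(t:ℂ)))
        + Complex.I * ((ξ:ℂ) - y)/(2*(t:ℂ)) * (Complex.I * ((ξ:ℂ) - y)/(2*(t:ℂ)) *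
          Complex.exp (Complex.I * ((ξ:ℂ) - y)^2 / (4*(t:ℂ)))) := by
    intro ξ; fun_prop
  have h1 : ∀ᶠ ξ : ℝ in nhds x, AEStronglyMeasurable
      (fun y : ℝ => Complex.I * ((ξ:ℂ) - y)/(2*(t:ℂ)) *
        Complex.exp (Complex.I * ((ξ:ℂ) - y)^2 / (4*(t:ℂ))) * f₀ y) volume :=
    Filter.Eventually.of_forall fun ξ => (hint _ (hcont' ξ)).aestronglyMeasurable
  have h2 : Integrable (fun y : ℝ => Complex.I * ((x:ℂ) - y)/(2*(t:ℂ)) *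
      Complex.exp (Complex.I * ((x:ℂ) - y)^2 / (4*(t:ℂ))) * f₀ y) := hint _ (hcont' x)
  have h3 := (hint _ (hcont'' x)).aestronglyMeasurable
  have h4 : ∀ᵐ y : ℝ, ∀ ξ ∈ Metric.ball x 1,
      ‖(Complex.I/(2*(t:ℂ)) * Complex.exp (Complex.I * ((ξ:ℂ) - y)^2 / (4*(t:ℂ)))
        + Complex.I * ((ξ:ℂ) - y)/(2*(t:ℂ)) * (Complex.I * ((ξ:ℂ) - y)/(2*(t:ℂ)) *
          Complex.exp (Complex.I * ((ξ:ℂ) - y)^2 / (4*(t:ℂ))))) * f₀ y‖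
      ≤ (1/(2*|t|) + ((|x| + 1 + |y|)/(2*|t|))^2) * ‖f₀ y‖ := by
    refine Filter.Eventually.of_forall fun y ξ hξ => ?_
    rw [norm_mul]
    have hb : |ξ - y| ≤ |x| + 1 + |y| := by
      have hξx : |ξ - x| < 1 := by simpa [Real.dist_eq] using Metric.mem_ball.1 hξ
      calc |ξ - y| ≤ |ξ| + |y| := abs_sub _ _
        _ ≤ |x| + 1 + |y| := by
            have := abs_sub_abs_le_abs_sub ξ x
            linarith
    have hA : ‖Complex.I/(2*(t:ℂ)) * Complex.exp (Complex.I * ((ξ:ℂ) - y)^2 / (4*(t:ℂ)))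
        + Complex.I * ((ξ:ℂ) - y)/(2*(t:ℂ)) * (Complex.I * ((ξ:ℂ) - y)/(2*(t:ℂ)) *
          Complex.exp (Complex.I * ((ξ:ℂ) - y)^2 / (4*(t:ℂ))))‖
        ≤ 1/(2*|t|) + ((|x| + 1 + |y|)/(2*|t|))^2 := by
      refine (norm_add_le _ _).trans ?_
      rw [norm_mul, FS.norm_exp, mul_one, FS.norm_I_div, norm_mul, norm_mul, FS.norm_exp,
        mul_one, FS.norm_lin, ← pow_two]
      have ha : |ξ - y|/(2*|t|) ≤ (|x| + 1 + |y|)/(2*|t|) := by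
        gcongr
      have ha0 : (0:ℝ) ≤ |ξ - y|/(2*|t|) := by positivity
      nlinarith [ha, ha0]
    gcongr
  have h5 : Integrable (fun y : ℝ => (1/(2*|t|) + ((|x| + 1 + |y|)/(2*|t|))^2) * ‖f₀ y‖) :=
    hintn _ (by fun_prop)
  have h6 : ∀ᵐ y : ℝ, ∀ ξ ∈ Metric.ball x 1,
      HasDerivAt (fun ξ' : ℝ => Complex.I * ((ξ':ℂ) - y)/(2*(t:ℂ)) *
          Complex.exp (Complex.I * ((ξ':ℂ) - y)^2 / (4*(t:ℂ))) * f₀ y)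
        ((Complex.I/(2*(t:ℂ)) * Complex.exp (Complex.I * ((ξ:ℂ) - y)^2 / (4*(t:ℂ)))
          + Complex.I * ((ξ:ℂ) - y)/(2*(t:ℂ)) * (Complex.I * ((ξ:ℂ) - y)/(2*(t:ℂ)) *
            Complex.exp (Complex.I * ((ξ:ℂ) - y)^2 / (4*(t:ℂ))))) * f₀ y) ξ :=
    Filter.Eventually.of_forall fun y ξ _ => ((hlin ξ y).mul (hptw ξ y)).mul_const (f₀ y)
  exact hasDerivAt_integral_of_dominated_loc_of_deriv_le (Metric.ball_mem_nhds x one_pos) h1 h2 h3 h4 h5 h6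

lemma FS.key_t (f₀ : ℝ → ℂ) (hf₀ : Continuous f₀)
    (t : ℝ) (ht : t ≠ 0) (x : ℝ)
    (hptw : ∀ (τ : ℝ), τ ≠ 0 → ∀ y : ℝ,
      HasDerivAt (fun τ' : ℝ => Complex.exp (Complex.I * ((x:ℂ) - y)^2 / (4*(τ':ℂ))))
        (Complex.exp (Complex.I * ((x:ℂ) - y)^2 / (4*(τ:ℂ))) *
          (-(Complex.I * ((x:ℂ) - y)^2) / (4*(τ:ℂ)^2))) τ)
    (hint : ∀ g : ℝ → ℂ, Continuous g → Integrable (fun y => g y * f₀ y))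
    (hintn : ∀ g : ℝ → ℝ, Continuous g → Integrable (fun y => g y * ‖f₀ y‖)) :
    Integrable (fun y : ℝ => Complex.exp (Complex.I * ((x:ℂ) - y)^2 / (4*(t:ℂ))) *
        (-(Complex.I * ((x:ℂ) - y)^2) / (4*(t:ℂ)^2)) * f₀ y) ∧
    HasDerivAt (fun τ : ℝ => ∫ y : ℝ, Complex.exp (Complex.I * ((x:ℂ) - y)^2 / (4*(τ:ℂ))) * f₀ y)
      (∫ y : ℝ, Complex.exp (Complex.I * ((x:ℂ) - y)^2 / (4*(t:ℂ))) *
        (-(Complex.I * ((x:ℂ) - y)^2) / (4*(t:ℂ)^2)) * f₀ y) t := by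
  have hcont : ∀ τ : ℝ, Continuous fun y : ℝ =>
      Complex.exp (Complex.I * ((x:ℂ) - y)^2 / (4*(τ:ℂ))) := by
    intro τ; fun_prop
  have hε : 0 < |t|/2 := by positivity
  have hball : ∀ τ ∈ Metric.ball t (|t|/2), |t|/2 < |τ| := by
    intro τ hτ
    have : |τ - t| < |t|/2 := by simpa [Real.dist_eq] using Metric.mem_ball.1 hτ
    have := abs_sub_abs_le_abs_sub t τ
    rw [abs_sub_comm] at this
    linarith
  have h1 : ∀ᶠ τ : ℝ in nhds t, AEStronglyMeasurable
      (fun y : ℝ => Complex.exp (Complex.I * ((x:ℂ) - y)^2 / (4*(τ:ℂ))) * f₀ y) volume :=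
    Filter.Eventually.of_forall fun τ => (hint _ (hcont τ)).aestronglyMeasurable
  have h2 : Integrable (fun y : ℝ => Complex.exp (Complex.I * ((x:ℂ) - y)^2 / (4*(t:ℂ))) * f₀ y) :=
    hint _ (hcont t)
  have h3 : AEStronglyMeasurable (fun y : ℝ => Complex.exp (Complex.I * ((x:ℂ) - y)^2 / (4*(t:ℂ))) *
      (-(Complex.I * ((x:ℂ) - y)^2) / (4*(t:ℂ)^2)) * f₀ y) volume :=
    (hint _ (by fun_prop)).aestronglyMeasurable
  have h4 : ∀ᵐ y : ℝ, ∀ τ ∈ Metric.ball t (|t|/2),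
      ‖Complex.exp (Complex.I * ((x:ℂ) - y)^2 / (4*(τ:ℂ))) *
        (-(Complex.I * ((x:ℂ) - y)^2) / (4*(τ:ℂ)^2)) * f₀ y‖
      ≤ (x - y)^2/t^2 * ‖f₀ y‖ := by
    refine Filter.Eventually.of_forall fun y τ hτ => ?_
    have hτt := hball τ hτ
    have h : -(Complex.I * ((x:ℂ) - y)^2) / (4*(τ:ℂ)^2)
        = ((-((x - y)^2/(4*τ^2)) : ℝ) : ℂ) * Complex.I := by push_cast; ring
    rw [norm_mul, norm_mul, FS.norm_exp, one_mul, h, norm_mul, Complex.norm_I, mul_one,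
      Complex.norm_real, Real.norm_eq_abs, abs_neg, abs_div,
      _root_.abs_of_nonneg (sq_nonneg (x - y)),
      _root_.abs_of_nonneg (by positivity : (0:ℝ) ≤ 4*τ^2)]
    have h4τ : t^2 ≤ 4*τ^2 := by
      nlinarith [_root_.sq_abs τ, _root_.sq_abs t, hτt, abs_nonneg t, abs_nonneg τ]
    have ht2 : (0:ℝ) < t^2 := by positivity
    gcongr
  have h5 : Integrable (fun y : ℝ => (x - y)^2/t^2 * ‖f₀ y‖) := hintn _ (by fun_prop)
  have h6 : ∀ᵐ y : ℝ, ∀ τ ∈ Metric.ball t (|t|/2),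
      HasDerivAt (fun τ' : ℝ => Complex.exp (Complex.I * ((x:ℂ) - y)^2 / (4*(τ':ℂ))) * f₀ y)
        (Complex.exp (Complex.I * ((x:ℂ) - y)^2 / (4*(τ:ℂ))) *
          (-(Complex.I * ((x:ℂ) - y)^2) / (4*(τ:ℂ)^2)) * f₀ y) τ := by
    refine Filter.Eventually.of_forall fun y τ hτ => ?_
    have hτ0 : τ ≠ 0 := by
      have := hball τ hτ
      intro h0
      rw [h0] at this
      simp at this
      linarith [abs_nonneg t, hε]
    exact (hptw τ hτ0 y).mul_const (f₀ y)
  exact hasDerivAt_integral_of_dominated_loc_of_deriv_le (Metric.ball_mem_nhds t hε) h1 h2 h3 h4 h5 h6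

lemma FS.hz_ne (t : ℝ) (ht : t ≠ 0) : (4*(Real.pi:ℂ)*Complex.I*(t:ℂ)) ≠ 0 := by
  simp [Complex.ext_iff, Complex.ofReal_ne_zero, ht, Real.pi_ne_zero, Complex.I_ne_zero]

lemma FS.hasDerivAt_c (t : ℝ) (ht : t ≠ 0) :
    HasDerivAt (fun τ : ℝ => (4*(Real.pi:ℂ)*Complex.I*(τ:ℂ)) ^ (-(1:ℂ)/2))
      ((-(1:ℂ)/(2*(t:ℂ))) * (4*(Real.pi:ℂ)*Complex.I*(t:ℂ)) ^ (-(1:ℂ)/2)) t := by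
  have hz : (4*(Real.pi:ℂ)*Complex.I*(t:ℂ)) ≠ 0 := FS.hz_ne t ht
  have hlinC : HasDerivAt (fun z : ℂ => 4*(Real.pi:ℂ)*Complex.I*z)
      (4*(Real.pi:ℂ)*Complex.I) (t:ℂ) := by
    simpa using (hasDerivAt_id ((t:ℂ))).const_mul (4*(Real.pi:ℂ)*Complex.I)
  have hslit : (4*(Real.pi:ℂ)*Complex.I*(t:ℂ)) ∈ Complex.slitPlane := by
    rw [Complex.mem_slitPlane_iff]
    right
    simp only [Complex.mul_im, Complex.mul_re, Complex.I_re, Complex.I_im, Complex.ofReal_re,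
      Complex.ofReal_im]
    norm_num
    exact ht
  have hd := (hlinC.cpow_const (c := -(1:ℂ)/2) hslit).comp_ofReal
  convert hd using 1
  have e1 : (4*(Real.pi:ℂ)*Complex.I*(t:ℂ)) ^ (-(1:ℂ)/2)
      = (4*(Real.pi:ℂ)*Complex.I*(t:ℂ)) ^ (-(1:ℂ)/2 - 1) * (4*(Real.pi:ℂ)*Complex.I*(t:ℂ)) := by
    calc (4*(Real.pi:ℂ)*Complex.I*(t:ℂ)) ^ (-(1:ℂ)/2)
        = (4*(Real.pi:ℂ)*Complex.I*(t:ℂ)) ^ (-(1:ℂ)/2 - 1 + 1) := by norm_num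
      _ = (4*(Real.pi:ℂ)*Complex.I*(t:ℂ)) ^ (-(1:ℂ)/2 - 1)
            * (4*(Real.pi:ℂ)*Complex.I*(t:ℂ)) ^ (1:ℂ) := Complex.cpow_add _ _ hz
      _ = (4*(Real.pi:ℂ)*Complex.I*(t:ℂ)) ^ (-(1:ℂ)/2 - 1) * (4*(Real.pi:ℂ)*Complex.I*(t:ℂ)) := by
          rw [Complex.cpow_one]
  rw [e1]
  have htC : ((t:ℂ)) ≠ 0 := Complex.ofReal_ne_zero.mpr ht
  field_simp

end FSaux

/-- The free Schrödinger evolution of `f₀`: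
`u(t,x) = (4πit)^{-1/2} ∫ e^{i(x-y)²/(4t)} f₀(y) dy`, with the principal branch of the
square root (via the complex power function). -/
noncomputable def freeSchrodingerSolution (f₀ : ℝ → ℂ) (t x : ℝ) : ℂ :=
  (4 * (Real.pi : ℂ) * Complex.I * (t : ℂ)) ^ (-(1 : ℂ) / 2) *
    ∫ y : ℝ, Complex.exp (Complex.I * ((x : ℂ) - (y : ℂ)) ^ 2 / (4 * (t : ℂ))) * f₀ y

/-- For continuous compactly supported `f₀`, the function
`u(t,x) = (4πit)^{-1/2} ∫ e^{i(x-y)²/(4t)} f₀(y) dy` satisfies, for `t ≠ 0`: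
(1) it is differentiable in `t` and twice differentiable in `x`, with
`i ∂ₜu + ∂ₓₓu = 0`; and (2) `sup_x |u(t,x)| ≤ (4π|t|)^{-1/2} ‖f₀‖_{L¹}`. -/
theorem freeSchrodinger_fundamental_solution (f₀ : ℝ → ℂ)
    (hf₀ : Continuous f₀) (hsupp : HasCompactSupport f₀) :
    (∀ t : ℝ, t ≠ 0 → ∀ x : ℝ,
      ∃ ut uxx : ℂ, ∃ ux : ℝ → ℂ,
        HasDerivAt (fun τ : ℝ => freeSchrodingerSolution f₀ τ x) ut t ∧
        (∀ ξ : ℝ, HasDerivAt (fun ξ' : ℝ => freeSchrodingerSolution f₀ t ξ') (ux ξ) ξ) ∧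
        HasDerivAt ux uxx x ∧
        Complex.I * ut + uxx = 0) ∧
    (∀ t : ℝ, t ≠ 0 → ∀ x : ℝ,
      ‖freeSchrodingerSolution f₀ t x‖
        ≤ (4 * Real.pi * |t|) ^ (-(1 : ℝ) / 2) * ∫ y : ℝ, ‖f₀ y‖) := by
  have hint : ∀ g : ℝ → ℂ, Continuous g → MeasureTheory.Integrable (fun y => g y * f₀ y) :=
    fun g hg => FS.integrable_mul f₀ hf₀ hsupp g hg
  have hintn : ∀ g : ℝ → ℝ, Continuous g → MeasureTheory.Integrable (fun y => g y * ‖f₀ y‖) :=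
    fun g hg => FS.integrable_mul_norm f₀ hf₀ hsupp g hg
  constructor
  · intro t ht x
    have htC : ((t:ℂ)) ≠ 0 := Complex.ofReal_ne_zero.mpr ht
    obtain ⟨hJxx_int, hKxx⟩ := FS.key_xx f₀ hf₀ t ht x (FS.hasDerivAt_exp_x t)
      (FS.hasDerivAt_lin t) hint hintn
    obtain ⟨hJt_int, hKt⟩ := FS.key_t f₀ hf₀ t ht x
      (fun τ hτ y => FS.hasDerivAt_exp_t τ hτ x y) hint hintn
    have hc := FS.hasDerivAt_c t ht
    set c : ℂ := (4*(Real.pi:ℂ)*Complex.I*(t:ℂ)) ^ (-(1:ℂ)/2) with hcdef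
    set A : ℂ := ∫ y : ℝ, Complex.exp (Complex.I * ((x:ℂ) - y)^2 / (4*(t:ℂ))) * f₀ y with hAdef
    set B : ℂ := ∫ y : ℝ, Complex.exp (Complex.I * ((x:ℂ) - y)^2 / (4*(t:ℂ))) *
        (-(Complex.I * ((x:ℂ) - y)^2) / (4*(t:ℂ)^2)) * f₀ y with hBdef
    set D : ℂ := ∫ y : ℝ, (Complex.I/(2*(t:ℂ)) * Complex.exp (Complex.I * ((x:ℂ) - y)^2 / (4*(t:ℂ)))
        + Complex.I * ((x:ℂ) - y)/(2*(t:ℂ)) * (Complex.I * ((x:ℂ) - y)/(2*(t:ℂ)) *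
          Complex.exp (Complex.I * ((x:ℂ) - y)^2 / (4*(t:ℂ))))) * f₀ y with hDdef
    refine ⟨(-(1:ℂ)/(2*(t:ℂ))) * c * A + c * B, c * D,
      fun ξ => c * ∫ y : ℝ, Complex.I * ((ξ:ℂ) - y)/(2*(t:ℂ)) *
        Complex.exp (Complex.I * ((ξ:ℂ) - y)^2 / (4*(t:ℂ))) * f₀ y, ?_, ?_, ?_, ?_⟩
    · exact hc.mul hKt
    · intro ξ
      have h := (FS.key_x f₀ hf₀ hsupp t ht ξ (FS.hasDerivAt_exp_x t) hint hintn).2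
      simpa only [freeSchrodingerSolution] using h.const_mul c
    · exact hKxx.const_mul c
    · have hcomb : Complex.I * B + D = (Complex.I/(2*(t:ℂ))) * A := by
        rw [hBdef, hDdef, hAdef, ← MeasureTheory.integral_const_mul,
          ← MeasureTheory.integral_add (hJt_int.const_mul Complex.I) hJxx_int]
        rw [← MeasureTheory.integral_const_mul]
        congr 1
        funext y
        ring
      linear_combination c * hcomb
  · intro t ht x
    have hz := FS.hz_ne t ht
    have hnormc : ‖(4*(Real.pi:ℂ)*Complex.I*(t:ℂ)) ^ (-(1:ℂ)/2)‖
        = (4 * Real.pi * |t|) ^ (-(1:ℝ)/2) := by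
      rw [Complex.norm_cpow_of_ne_zero hz]
      have h1 : (-(1:ℂ)/2) = ((-(1:ℝ)/2 : ℝ) : ℂ) := by norm_num
      rw [h1, Complex.ofReal_re, Complex.ofReal_im, mul_zero, Real.exp_zero, div_one]
      congr 1
      simp [Complex.norm_real, abs_of_nonneg Real.pi_pos.le]
    simp only [freeSchrodingerSolution]
    rw [norm_mul, hnormc]
    have hS : ‖∫ y : ℝ, Complex.exp (Complex.I * ((x:ℂ) - y)^2 / (4*(t:ℂ))) * f₀ y‖
        ≤ ∫ y : ℝ, ‖f₀ y‖ := by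
      refine (MeasureTheory.norm_integral_le_integral_norm _).trans_eq ?_
      simp only [norm_mul, FS.norm_exp, one_mul]
    exact mul_le_mul_of_nonneg_left hS (Real.rpow_nonneg (by positivity) _)
end

section
/- Let k ∈ ℂ with k ≠ 0 and Im k ≥ 0, and let f : ℝ → ℂ be continuous with compact support. Define u(x) = (i/(2k)) ∫_ℝ e^{ik|x−y|} f(y) dy. Then u is twice differentiable on ℝ and satisfies u''(x) + k² u(x) = −f(x) for every x ∈ ℝ. -/
open MeasureTheory

/-- The outgoing free resolvent kernel in dimension one: for `k ≠ 0` with `Im k ≥ 0`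
and `f` continuous with compact support, `u(x) = (i/(2k)) ∫ e^{ik|x-y|} f(y) dy` is twice
differentiable and satisfies `u'' + k² u = -f`. -/
theorem free_resolvent_kernel_one_dim (k : ℂ) (hk : k ≠ 0) (hIm : 0 ≤ k.im)
    (f : ℝ → ℂ) (hf : Continuous f) (hsupp : HasCompactSupport f) :
    ∃ u u' : ℝ → ℂ,
      (∀ x : ℝ, u x = (Complex.I / (2 * k)) * ∫ y : ℝ, Complex.exp (Complex.I * k * |x - y|) * f y) ∧
      (∀ x : ℝ, HasDerivAt u (u' x) x) ∧
      (∀ x : ℝ, HasDerivAt u' (-f x - k ^ 2 * u x) x) := by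
  set c : ℂ := Complex.I / (2 * k) with hc
  set g₁ : ℝ → ℂ := fun y => Complex.exp (-(Complex.I * k * y)) * f y with hg₁
  set g₂ : ℝ → ℂ := fun y => Complex.exp (Complex.I * k * y) * f y with hg₂
  have hg₁c : Continuous g₁ := by fun_prop
  have hg₂c : Continuous g₂ := by fun_prop
  have hg₁s : HasCompactSupport g₁ := hsupp.mul_left
  have hg₂s : HasCompactSupport g₂ := hsupp.mul_left
  have hg₁i : Integrable g₁ := hg₁c.integrable_of_hasCompactSupport hg₁s
  have hg₂i : Integrable g₂ := hg₂c.integrable_of_hasCompactSupport hg₂s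
  set A : ℝ → ℂ := fun x => ∫ y in Set.Iic x, g₁ y with hA
  set B : ℝ → ℂ := fun x => ∫ y in Set.Ioi x, g₂ y with hB
  -- key cancellation
  have hcancel : ∀ x : ℝ, Complex.exp (Complex.I * k * x) * Complex.exp (-(Complex.I * k * x)) = 1 := by
    intro x
    rw [← Complex.exp_add, add_neg_cancel, Complex.exp_zero]
  -- the integral splits
  have hsplit : ∀ x : ℝ,
      (∫ y : ℝ, Complex.exp (Complex.I * k * |x - y|) * f y) =
        Complex.exp (Complex.I * k * x) * A x + Complex.exp (-(Complex.I * k * x)) * B x := by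
    intro x
    have hci : Continuous fun y : ℝ => Complex.exp (Complex.I * k * |x - y|) * f y := by fun_prop
    have hii : Integrable fun y : ℝ => Complex.exp (Complex.I * k * |x - y|) * f y :=
      hci.integrable_of_hasCompactSupport hsupp.mul_left
    rw [← intervalIntegral.integral_Iic_add_Ioi hii.integrableOn hii.integrableOn]
    congr 1
    · rw [hA, ← integral_const_mul]
      refine setIntegral_congr_fun measurableSet_Iic fun y hy => ?_
      have h1 : |x - y| = x - y := abs_of_nonneg (sub_nonneg.2 hy)
      have h2 : Complex.I * k * ((x : ℂ) - y) = Complex.I * k * x + -(Complex.I * k * y) := by ring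
      simp only [hg₁, h1]
      push_cast
      rw [h2, Complex.exp_add]
      ring
    · rw [hB, ← integral_const_mul]
      refine setIntegral_congr_fun measurableSet_Ioi fun y hy => ?_
      have h1 : |x - y| = y - x := by
        rw [abs_sub_comm]; exact abs_of_nonneg (sub_nonneg.2 hy.le)
      have h2 : Complex.I * k * ((y : ℂ) - x) = -(Complex.I * k * x) + Complex.I * k * y := by ring
      simp only [hg₂, h1]
      push_cast
      rw [h2, Complex.exp_add]
      ring
  -- derivatives of A and B
  have hAd : ∀ x : ℝ, HasDerivAt A (g₁ x) x := by
    intro x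
    have hrw : A = fun t => (∫ y in Set.Iic (0:ℝ), g₁ y) + ∫ y in (0:ℝ)..t, g₁ y := by
      funext t
      rw [hA, ← intervalIntegral.integral_Iic_sub_Iic hg₁i.integrableOn hg₁i.integrableOn]
      ring
    rw [hrw]
    exact (intervalIntegral.integral_hasDerivAt_right (hg₁i.intervalIntegrable)
      hg₁c.aestronglyMeasurable.stronglyMeasurableAtFilter hg₁c.continuousAt).const_add _
  have hBd : ∀ x : ℝ, HasDerivAt B (-g₂ x) x := by
    intro x
    have hrw : B = fun t => (∫ y, g₂ y) - ((∫ y in Set.Iic (0:ℝ), g₂ y) + ∫ y in (0:ℝ)..t, g₂ y) := by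
      funext t
      have h1 := intervalIntegral.integral_Iic_add_Ioi (b := t) hg₂i.integrableOn hg₂i.integrableOn
      rw [hB, ← intervalIntegral.integral_Iic_sub_Iic hg₂i.integrableOn hg₂i.integrableOn]
      rw [← h1]; ring
    rw [hrw]
    have h0 : HasDerivAt (fun t => ∫ y in (0:ℝ)..t, g₂ y) (g₂ x) x :=
      intervalIntegral.integral_hasDerivAt_right (hg₂i.intervalIntegrable)
        hg₂c.aestronglyMeasurable.stronglyMeasurableAtFilter hg₂c.continuousAt
    have := (h0.const_add (∫ y in Set.Iic (0:ℝ), g₂ y)).const_sub (∫ y, g₂ y)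
    simpa using this
  -- derivative of the exponentials
  have hlin : ∀ x : ℝ, HasDerivAt (fun t : ℝ => Complex.I * k * t) (Complex.I * k) x := by
    intro x
    simpa using (Complex.ofRealCLM.hasDerivAt (x := x)).const_mul (Complex.I * k)
  have hE : ∀ x : ℝ, HasDerivAt (fun t : ℝ => Complex.exp (Complex.I * k * t))
      (Complex.exp (Complex.I * k * x) * (Complex.I * k)) x := fun x => (hlin x).cexp
  have hE' : ∀ x : ℝ, HasDerivAt (fun t : ℝ => Complex.exp (-(Complex.I * k * t)))
      (Complex.exp (-(Complex.I * k * x)) * (-(Complex.I * k))) x := fun x => (hlin x).neg.cexp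
  refine ⟨fun x => c * (Complex.exp (Complex.I * k * x) * A x + Complex.exp (-(Complex.I * k * x)) * B x),
    fun x => c * (Complex.I * k) *
      (Complex.exp (Complex.I * k * x) * A x - Complex.exp (-(Complex.I * k * x)) * B x),
    fun x => by rw [hsplit x], fun x => ?_, fun x => ?_⟩
  · have h := (((hE x).mul (hAd x)).add ((hE' x).mul (hBd x))).const_mul c
    have e1 : Complex.exp (Complex.I * k * x) * g₁ x = f x := by
      simp only [hg₁]
      rw [← mul_assoc, hcancel x, one_mul]
    have e2 : Complex.exp (-(Complex.I * k * x)) * -g₂ x = -f x := by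
      simp only [hg₂]
      rw [mul_neg, neg_inj, ← mul_assoc,
        mul_comm (Complex.exp (-(Complex.I * k * (x:ℂ)))), hcancel x, one_mul]
    refine h.congr_deriv (Eq.symm ?_)
    rw [e1, e2]
    ring
  · have h := ((((hE x).mul (hAd x)).sub ((hE' x).mul (hBd x))).const_mul
      (c * (Complex.I * k)))
    have e1 : Complex.exp (Complex.I * k * x) * g₁ x = f x := by
      simp only [hg₁]
      rw [← mul_assoc, hcancel x, one_mul]
    have e2 : Complex.exp (-(Complex.I * k * x)) * -g₂ x = -f x := by
      simp only [hg₂]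
      rw [mul_neg, neg_inj, ← mul_assoc,
        mul_comm (Complex.exp (-(Complex.I * k * (x:ℂ)))), hcancel x, one_mul]
    have h2k : (2 : ℂ) * k ≠ 0 := by simpa using hk
    have hck : c * (Complex.I * k) * 2 = -1 := by
      rw [hc, div_mul_eq_mul_div, div_mul_eq_mul_div, div_eq_iff h2k]
      linear_combination (2 * k) * Complex.I_sq
    have hII : Complex.I * k * (Complex.I * k) = -k ^ 2 := by
      linear_combination k ^ 2 * Complex.I_sq
    have hck2 : c * (Complex.I * k) * (Complex.I * k) = -k ^ 2 * c := by
      rw [mul_assoc, hII]; ring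
    refine h.congr_deriv (Eq.symm ?_)
    rw [e1, e2]
    linear_combination (-(f x)) * hck +
      (-(Complex.exp (Complex.I * k * x) * A x) - Complex.exp (-(Complex.I * k * x)) * B x) * hck2
end
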